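/- Let f : ℝ^n → ℝ ∪ {+∞} be proper, lower semicontinuous, coercive, and uniformly quasiconvex with modulus φ on a closed convex set C ⊆ dom f, let p > 2, set σ̂_p = (1/2)^{(3p−2)/2}, let {x^k}_{k≥0} be a HiPPA sequence for f on C with order p and parameters γ_k ∈ (γ_min, γ_max), and let x̄ be the unique global minimizer of f on C. Then for every k ≥ 0: γ_k·φ(‖x̄ − x^{k+1}‖) + (σ̂_p/p)·‖x̄ − x^{k+1}‖^p ≤ ‖x̄ − x^k‖^{p−1}·‖x̄ − x^{k+1}‖. -/

import Mathlib

noncomputable section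

open Set Filter Topology
open scoped RealInnerProductSpace

/-- `φ : [0,∞) → [0,∞]` is a modulus: increasing and vanishing only at `0`. -/
def IsModulus (φ : ℝ → EReal) : Prop :=
  (∀ ⦃s t : ℝ⦄, 0 ≤ s → s ≤ t → φ s ≤ φ t) ∧ φ 0 = 0 ∧ (∀ t : ℝ, 0 < t → 0 < φ t)

/-- `f` is uniformly quasiconvex on `C` with modulus `φ`. -/
def UnifQuasiconvexOn {E : Type*} [NormedAddCommGroup E] [NormedSpace ℝ E]
    (C : Set E) (φ : ℝ → EReal) (f : E → EReal) : Prop :=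
  ∀ ⦃x⦄, x ∈ C → ∀ ⦃y⦄, y ∈ C → ∀ ⦃l : ℝ⦄, l ∈ Set.Icc (0 : ℝ) 1 →
    f (l • x + (1 - l) • y) + ((l * (1 - l) : ℝ) : EReal) * φ ‖x - y‖ ≤ max (f x) (f y)

/-- `f(x) → +∞` as `‖x‖ → +∞`. -/
def Coercive {E : Type*} [NormedAddCommGroup E] (f : E → EReal) : Prop :=
  ∀ M : ℝ, ∃ R : ℝ, ∀ x : E, R ≤ ‖x‖ → (M : EReal) < f x

/-- The high-order proximal set `prox_{f,γ}^p(C, x) = argmin_{y ∈ C} (f(y) + (1/(pγ))‖x − y‖^p)`. -/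
def HOProx {E : Type*} [NormedAddCommGroup E]
    (f : E → EReal) (C : Set E) (p γ : ℝ) (x : E) : Set E :=
  {y | y ∈ C ∧ ∀ z ∈ C,
    f y + ((1 / (p * γ) * ‖x - y‖ ^ p : ℝ) : EReal)
      ≤ f z + ((1 / (p * γ) * ‖x - z‖ ^ p : ℝ) : EReal)}

section Helpers
variable {E : Type*} [NormedAddCommGroup E] [InnerProductSpace ℝ E]

lemma scalar_grad {p : ℝ} (hp : 2 < p) {s t : ℝ} (hs : 0 ≤ s) (ht : 0 ≤ t) :
    t ^ p + p * t ^ (p - 1) * (s - t) ≤ s ^ p := by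
  rcases eq_or_lt_of_le ht with h0 | ht
  · rw [← h0, Real.zero_rpow (by linarith : p ≠ 0),
      Real.zero_rpow (by intro h; linarith [h] : p - 1 ≠ 0)]
    simpa using Real.rpow_nonneg hs p
  · set r := s / t - 1 with hr
    have hr1 : -1 ≤ r := by
      have : 0 ≤ s / t := div_nonneg hs ht.le
      simp only [hr]; linarith
    have hB := one_add_mul_self_le_rpow_one_add hr1 (le_of_lt (by linarith : (1:ℝ) < p))
    have h1r : 1 + r = s / t := by simp [hr]
    rw [h1r, Real.div_rpow hs ht.le] at hB
    have htp : 0 < t ^ p := Real.rpow_pos_of_pos ht p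
    have hB2 := mul_le_mul_of_nonneg_right hB htp.le
    rw [div_mul_cancel₀ _ (ne_of_gt htp)] at hB2
    have hsplit : t ^ p = t ^ (p - 1) * t := by
      rw [show p = (p - 1) + 1 by ring, Real.rpow_add ht, Real.rpow_one]; ring_nf
    have hrt : r * t = s - t := by rw [hr, sub_mul, div_mul_cancel₀ _ (ne_of_gt ht), one_mul]
    calc t ^ p + p * t ^ (p - 1) * (s - t)
        = (1 + p * r) * t ^ p := by rw [← hrt, hsplit]; ring
      _ ≤ s ^ p := hB2

lemma vec_grad {p : ℝ} (hp : 2 < p) (w a : E) :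
    ‖w‖ ^ p + p * ‖w‖ ^ (p - 2) * ⟪w, a - w⟫ ≤ ‖a‖ ^ p := by
  have hCS : ⟪w, a⟫ ≤ ‖w‖ * ‖a‖ := real_inner_le_norm w a
  have hw : ⟪w, a - w⟫ = ⟪w, a⟫ - ‖w‖ ^ 2 := by
    rw [inner_sub_right, real_inner_self_eq_norm_sq]
  have ht : (0:ℝ) ≤ ‖w‖ := norm_nonneg w
  have hs : (0:ℝ) ≤ ‖a‖ := norm_nonneg a
  have h2 : ‖w‖ ^ (p - 2) * ‖w‖ = ‖w‖ ^ (p - 1) := by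
    rw [show p - 1 = (p - 2) + 1 by ring, Real.rpow_add' ht (by intro h; linarith [h]),
      Real.rpow_one]
  have h3 : ‖w‖ ^ (p - 2) * ‖w‖ ^ (2:ℕ) = ‖w‖ ^ p := by
    rw [← Real.rpow_natCast ‖w‖ 2, ← Real.rpow_add' ht (by push_cast; intro h; linarith [h])]
    norm_num
  have key := scalar_grad hp hs ht
  have hnn : (0:ℝ) ≤ p * ‖w‖ ^ (p - 2) :=
    mul_nonneg (by linarith) (Real.rpow_nonneg ht _)
  have step1 : p * ‖w‖ ^ (p - 2) * ⟪w, a - w⟫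
      ≤ p * ‖w‖ ^ (p - 2) * (‖w‖ * ‖a‖ - ‖w‖ ^ (2:ℕ)) := by
    apply mul_le_mul_of_nonneg_left _ hnn
    rw [hw]; push_cast; linarith
  have step2 : p * ‖w‖ ^ (p - 2) * (‖w‖ * ‖a‖ - ‖w‖ ^ (2:ℕ))
      = p * (‖w‖ ^ (p - 1) * ‖a‖ - ‖w‖ ^ p) := by
    rw [← h2, ← h3]; ring
  have hexp : p * ‖w‖ ^ (p - 1) * (‖a‖ - ‖w‖) = p * (‖w‖ ^ (p - 1) * ‖a‖ - ‖w‖ ^ p) := by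
    rw [← h2, ← h3]; push_cast; ring
  linarith [key, step1]

lemma key_mono {p : ℝ} (hp : 2 < p) (u v : E) :
    ‖v‖ ^ (p - 2) * ⟪v, u - v⟫
      ≤ ‖u‖ ^ (p - 1) * ‖u - v‖ - (1/2 : ℝ) ^ (p - 1) * ‖u - v‖ ^ p := by
  have hA : (0:ℝ) ≤ ‖u‖ := norm_nonneg u
  have hB : (0:ℝ) ≤ ‖v‖ := norm_nonneg v
  have hW : (0:ℝ) ≤ ‖u - v‖ := norm_nonneg _
  have hi1 : ⟪v, u - v⟫ = ⟪u, v⟫ - ‖v‖ ^ 2 := by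
    rw [inner_sub_right, real_inner_self_eq_norm_sq, real_inner_comm]
  have hi2 : ⟪u, u - v⟫ = ‖u‖ ^ 2 - ⟪u, v⟫ := by
    rw [inner_sub_right, real_inner_self_eq_norm_sq]
  have hW2 : ‖u - v‖ ^ 2 = ‖u‖ ^ 2 - 2 * ⟪u, v⟫ + ‖v‖ ^ 2 := norm_sub_sq_real u v
  have hup : ‖u‖ ^ (p - 2) * ‖u‖ ^ (2:ℕ) = ‖u‖ ^ p := by
    rw [← Real.rpow_natCast ‖u‖ 2, ← Real.rpow_add' hA (by push_cast; intro h; linarith [h])]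
    norm_num
  have hvp : ‖v‖ ^ (p - 2) * ‖v‖ ^ (2:ℕ) = ‖v‖ ^ p := by
    rw [← Real.rpow_natCast ‖v‖ 2, ← Real.rpow_add' hB (by push_cast; intro h; linarith [h])]
    norm_num
  have hwp : ‖u - v‖ ^ (p - 2) * ‖u - v‖ ^ (2:ℕ) = ‖u - v‖ ^ p := by
    rw [← Real.rpow_natCast ‖u - v‖ 2, ← Real.rpow_add' hW (by push_cast; intro h; linarith [h])]
    norm_num
  have hup1 : ‖u‖ ^ (p - 2) * ‖u‖ = ‖u‖ ^ (p - 1) := by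
    rw [show p - 1 = (p - 2) + 1 by ring, Real.rpow_add' hA (by intro h; linarith [h]),
      Real.rpow_one]
  -- monotonicity sign fact
  have hmono : 0 ≤ (‖u‖ ^ (p - 2) - ‖v‖ ^ (p - 2)) * (‖u‖ ^ (2:ℕ) - ‖v‖ ^ (2:ℕ)) := by
    rcases le_total ‖u‖ ‖v‖ with h | h
    · have h1 : ‖u‖ ^ (p - 2) ≤ ‖v‖ ^ (p - 2) := Real.rpow_le_rpow hA h (by linarith)
      have h2' : ‖u‖ ^ (2:ℕ) ≤ ‖v‖ ^ (2:ℕ) := pow_le_pow_left₀ hA h 2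
      nlinarith
    · have h1 : ‖v‖ ^ (p - 2) ≤ ‖u‖ ^ (p - 2) := Real.rpow_le_rpow hB h (by linarith)
      have h2' : ‖v‖ ^ (2:ℕ) ≤ ‖u‖ ^ (2:ℕ) := pow_le_pow_left₀ hB h 2
      nlinarith
  -- claim 1
  have claim1 : (1/2 : ℝ) * (‖u‖ ^ (p - 2) + ‖v‖ ^ (p - 2)) * ‖u - v‖ ^ 2
      ≤ ‖u‖ ^ (p - 2) * ⟪u, u - v⟫ - ‖v‖ ^ (p - 2) * ⟪v, u - v⟫ := by
    rw [hi1, hi2, hW2]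
    nlinarith [hmono]
  -- claim 2
  have hmax : ‖u - v‖ / 2 ≤ max ‖u‖ ‖v‖ := by
    have := norm_sub_le u v
    rcases le_total ‖u‖ ‖v‖ with h | h
    · rw [max_eq_right h]; linarith
    · rw [max_eq_left h]; linarith
  have hsum : (‖u - v‖ / 2) ^ (p - 2) ≤ ‖u‖ ^ (p - 2) + ‖v‖ ^ (p - 2) := by
    rcases le_total ‖u‖ ‖v‖ with h | h
    · have : (‖u - v‖ / 2) ^ (p - 2) ≤ ‖v‖ ^ (p - 2) :=
        Real.rpow_le_rpow (by positivity) (by rw [max_eq_right h] at hmax; exact hmax) (by linarith)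
      have h0 : (0:ℝ) ≤ ‖u‖ ^ (p - 2) := Real.rpow_nonneg hA _
      linarith
    · have : (‖u - v‖ / 2) ^ (p - 2) ≤ ‖u‖ ^ (p - 2) :=
        Real.rpow_le_rpow (by positivity) (by rw [max_eq_left h] at hmax; exact hmax) (by linarith)
      have h0 : (0:ℝ) ≤ ‖v‖ ^ (p - 2) := Real.rpow_nonneg hB _
      linarith
  have hhalf : (‖u - v‖ / 2) ^ (p - 2) = (1/2 : ℝ) ^ (p - 2) * ‖u - v‖ ^ (p - 2) := by
    rw [show ‖u - v‖ / 2 = (1/2 : ℝ) * ‖u - v‖ by ring, Real.mul_rpow (by norm_num) hW]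
  have hhalf2 : (1/2 : ℝ) * (1/2 : ℝ) ^ (p - 2) = (1/2 : ℝ) ^ (p - 1) := by
    rw [show p - 1 = 1 + (p - 2) by ring, Real.rpow_add (by norm_num : (0:ℝ) < 1/2),
      Real.rpow_one]
  have claim2 : (1/2 : ℝ) ^ (p - 1) * ‖u - v‖ ^ p
      ≤ (1/2 : ℝ) * (‖u‖ ^ (p - 2) + ‖v‖ ^ (p - 2)) * ‖u - v‖ ^ 2 := by
    have hW2nn : (0:ℝ) ≤ ‖u - v‖ ^ (2:ℕ) := by positivity
    have := mul_le_mul_of_nonneg_right hsum hW2nn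
    rw [hhalf] at hsum
    calc (1/2 : ℝ) ^ (p - 1) * ‖u - v‖ ^ p
        = (1/2 : ℝ) * ((1/2 : ℝ) ^ (p - 2) * ‖u - v‖ ^ (p - 2)) * ‖u - v‖ ^ (2:ℕ) := by
          rw [show (1/2 : ℝ) * ((1/2 : ℝ) ^ (p - 2) * ‖u - v‖ ^ (p - 2)) * ‖u - v‖ ^ (2:ℕ)
              = ((1/2 : ℝ) * (1/2 : ℝ) ^ (p - 2)) * (‖u - v‖ ^ (p - 2) * ‖u - v‖ ^ (2:ℕ)) by ring,
            hhalf2, hwp]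
      _ ≤ (1/2 : ℝ) * (‖u‖ ^ (p - 2) + ‖v‖ ^ (p - 2)) * ‖u - v‖ ^ (2:ℕ) := by
          nlinarith [hsum, hW2nn]
      _ = (1/2 : ℝ) * (‖u‖ ^ (p - 2) + ‖v‖ ^ (p - 2)) * ‖u - v‖ ^ 2 := by norm_num
  -- Cauchy–Schwarz on ⟪u, u - v⟫
  have hCS : ⟪u, u - v⟫ ≤ ‖u‖ * ‖u - v‖ := real_inner_le_norm u (u - v)
  have hfin : ‖u‖ ^ (p - 2) * ⟪u, u - v⟫ ≤ ‖u‖ ^ (p - 1) * ‖u - v‖ := by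
    have h0 : (0:ℝ) ≤ ‖u‖ ^ (p - 2) := Real.rpow_nonneg hA _
    calc ‖u‖ ^ (p - 2) * ⟪u, u - v⟫ ≤ ‖u‖ ^ (p - 2) * (‖u‖ * ‖u - v‖) :=
          mul_le_mul_of_nonneg_left hCS h0
      _ = ‖u‖ ^ (p - 1) * ‖u - v‖ := by rw [← hup1]; ring
  linarith [claim1, claim2, hfin]

end Helpers

set_option maxHeartbeats 1000000 in
/-- For a HiPPA sequence with order `p > 2`,
`σ̂_p = (1/2)^((3p−2)/2)` and the unique global minimizer `x̄` of `f` on `C`, for every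
`k`: `γ_k·φ(‖x̄ − x^{k+1}‖) + (σ̂_p/p)·‖x̄ − x^{k+1}‖^p ≤ ‖x̄ − x^k‖^{p−1}·‖x̄ − x^{k+1}‖`. -/
theorem statement_16 (n : ℕ) (f : EuclideanSpace ℝ (Fin n) → EReal)
    (hproper : ∃ x, f x ≠ ⊤) (hbot : ∀ x, f x ≠ ⊥)
    (hlsc : LowerSemicontinuous f) (hcoer : Coercive f)
    (C : Set (EuclideanSpace ℝ (Fin n)))
    (hCclosed : IsClosed C) (hCconv : Convex ℝ C)
    (hdom : ∀ x ∈ C, f x ≠ ⊤)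
    (φ : ℝ → EReal) (hφ : IsModulus φ)
    (hquasi : UnifQuasiconvexOn C φ f)
    (p γmin γmax : ℝ) (hp : 2 < p) (hγmin : 0 < γmin) (hγ : γmin < γmax)
    (x : ℕ → EuclideanSpace ℝ (Fin n)) (γ : ℕ → ℝ)
    (hx0 : x 0 ∈ C)
    (hγk : ∀ k, γ k ∈ Set.Ioo γmin γmax)
    (hstep : ∀ k, x (k + 1) ∈ HOProx f C p (γ k) (x k))
    (xb : EuclideanSpace ℝ (Fin n)) (hxbC : xb ∈ C)
    (hxbmin : ∀ y ∈ C, f xb ≤ f y)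
    (hxbuniq : ∀ z ∈ C, (∀ y ∈ C, f z ≤ f y) → z = xb) :
    ∀ k : ℕ,
      ((γ k : ℝ) : EReal) * φ ‖xb - x (k + 1)‖
          + (((((1 : ℝ) / 2) ^ ((3 * p - 2) / 2) / p) * ‖xb - x (k + 1)‖ ^ p : ℝ) : EReal)
        ≤ ((‖xb - x k‖ ^ (p - 1) * ‖xb - x (k + 1)‖ : ℝ) : EReal) := by
  intro k
  have hmem := hstep k
  simp only [HOProx, Set.mem_setOf_eq] at hmem
  obtain ⟨hyC, hymin⟩ := hmem
  set y := x (k + 1) with hy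
  set xk := x k with hxkdef
  have hγpos : 0 < γ k := lt_trans hγmin (hγk k).1
  have hppos : (0:ℝ) < p := by linarith
  set c : ℝ := 1 / (p * γ k) with hc
  have hcpos : 0 < c := by rw [hc]; positivity
  have hry : f y = ((f y).toReal : EReal) := (EReal.coe_toReal (hdom y hyC) (hbot y)).symm
  set ry := (f y).toReal with hryd
  have hφ0 : (0:EReal) ≤ φ ‖xb - y‖ := by
    rw [← hφ.2.1]; exact hφ.1 le_rfl (norm_nonneg _)
  have hquasil : ∀ l : ℝ, l ∈ Set.Icc (0:ℝ) 1 →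
      f (l • xb + (1 - l) • y) + ((l * (1 - l) : ℝ) : EReal) * φ ‖xb - y‖ ≤ f y := by
    intro l hl
    have := hquasi hxbC hyC hl
    rwa [max_eq_right (hxbmin y hyC)] at this
  have hzC : ∀ l : ℝ, l ∈ Set.Icc (0:ℝ) 1 → l • xb + (1 - l) • y ∈ C := by
    intro l hl
    exact hCconv hxbC hyC hl.1 (by linarith [hl.2]) (by ring)
  -- finiteness of φ ‖xb - y‖
  have hTne : φ ‖xb - y‖ ≠ ⊤ := by
    intro hT
    have hl : (1/2 : ℝ) ∈ Set.Icc (0:ℝ) 1 := by norm_num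
    have h := hquasil (1/2) hl
    rw [hT, EReal.coe_mul_top_of_pos (by norm_num),
      EReal.add_top_of_ne_bot (hbot _)] at h
    exact hdom y hyC (top_le_iff.mp h)
  have hBne : φ ‖xb - y‖ ≠ ⊥ := by
    intro hB; rw [hB] at hφ0; simp at hφ0
  set F := (φ ‖xb - y‖).toReal with hFd
  have hFeq : φ ‖xb - y‖ = (F : EReal) := (EReal.coe_toReal hTne hBne).symm
  have hF0 : (0:ℝ) ≤ F := by
    rw [hFeq] at hφ0; exact_mod_cast hφ0
  -- real form of the combined prox/quasiconvexity inequality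
  have realmain : ∀ l : ℝ, l ∈ Set.Ioo (0:ℝ) 1 →
      l * (1 - l) * F ≤ c * ‖xk - y - l • (xb - y)‖ ^ p - c * ‖xk - y‖ ^ p := by
    intro l hl
    have hlI : l ∈ Set.Icc (0:ℝ) 1 := ⟨hl.1.le, hl.2.le⟩
    have hzC' := hzC l hlI
    have hrz : f (l • xb + (1 - l) • y)
        = (((f (l • xb + (1 - l) • y)).toReal : ℝ) : EReal) :=
      (EReal.coe_toReal (hdom _ hzC') (hbot _)).symm
    set rz := (f (l • xb + (1 - l) • y)).toReal with hrzd
    have hq := hquasil l hlI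
    rw [hrz, hry, hFeq, ← EReal.coe_mul] at hq
    have hqr : rz + l * (1 - l) * F ≤ ry := by exact_mod_cast hq
    have hp2 := hymin _ hzC'
    rw [hrz, hry] at hp2
    have hzeq : xk - (l • xb + (1 - l) • y) = xk - y - l • (xb - y) := by
      rw [smul_sub]; rw [sub_smul, one_smul]; abel
    rw [hzeq] at hp2
    have hpr : ry + c * ‖xk - y‖ ^ p ≤ rz + c * ‖xk - y - l • (xb - y)‖ ^ p := by
      exact_mod_cast hp2
    linarith
  -- divide by l
  have hstep2 : ∀ l : ℝ, l ∈ Set.Ioo (0:ℝ) 1 →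
      (1 - l) * F ≤ -(c * p) * (‖xk - y - l • (xb - y)‖ ^ (p - 2)
        * ⟪xk - y - l • (xb - y), xb - y⟫) := by
    intro l hl
    have hg := vec_grad hp (xk - y - l • (xb - y)) (xk - y)
    rw [sub_sub_cancel, real_inner_smul_right] at hg
    have hmain := realmain l hl
    have h6 : l * ((1 - l) * F) ≤ l * (-(c * p) * (‖xk - y - l • (xb - y)‖ ^ (p - 2)
        * ⟪xk - y - l • (xb - y), xb - y⟫)) := by
      nlinarith [mul_le_mul_of_nonneg_left hg hcpos.le]
    exact le_of_mul_le_mul_left h6 hl.1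
  -- take the limit l → 0⁺
  have c1 : Continuous fun l : ℝ => xk - y - l • (xb - y) :=
    continuous_const.sub (continuous_id.smul continuous_const)
  have hcont : ContinuousAt (fun l : ℝ => -(c * p) * (‖xk - y - l • (xb - y)‖ ^ (p - 2)
      * ⟪xk - y - l • (xb - y), xb - y⟫)) 0 := by
    have c2 : ContinuousAt (fun l : ℝ => ‖xk - y - l • (xb - y)‖ ^ (p - 2)) 0 :=
      (Real.continuousAt_rpow_const _ _ (Or.inr (by linarith))).comp
        c1.norm.continuousAt
    have c3 : Continuous fun l : ℝ => ⟪xk - y - l • (xb - y), xb - y⟫ :=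
      c1.inner continuous_const
    exact continuousAt_const.mul (c2.mul c3.continuousAt)
  have hlim2 : Tendsto (fun l : ℝ => -(c * p) * (‖xk - y - l • (xb - y)‖ ^ (p - 2)
      * ⟪xk - y - l • (xb - y), xb - y⟫)) (𝓝[>] (0:ℝ))
      (𝓝 (-(c * p) * (‖xk - y‖ ^ (p - 2) * ⟪xk - y, xb - y⟫))) := by
    have h := hcont.tendsto.mono_left (nhdsWithin_le_nhds (s := Set.Ioi (0:ℝ)))
    simpa using h
  have hlim1 : Tendsto (fun l : ℝ => (1 - l) * F) (𝓝[>] (0:ℝ)) (𝓝 F) := by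
    have h : ContinuousAt (fun l : ℝ => (1 - l) * F) 0 :=
      ((continuous_const.sub continuous_id).mul continuous_const).continuousAt
    have h2 := h.tendsto.mono_left (nhdsWithin_le_nhds (s := Set.Ioi (0:ℝ)))
    simpa using h2
  have hFle : F ≤ -(c * p) * (‖xk - y‖ ^ (p - 2) * ⟪xk - y, xb - y⟫) := by
    refine le_of_tendsto_of_tendsto hlim1 hlim2 ?_
    filter_upwards [Ioo_mem_nhdsGT_of_mem
      (show (0:ℝ) ∈ Set.Ico (0:ℝ) 1 by constructor <;> norm_num)] with l hl
    exact hstep2 l hl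
  -- rewrite in terms of v = y - xk
  have hcp : c * p = 1 / γ k := by
    rw [hc]; field_simp
  have hγF : γ k * F ≤ ‖y - xk‖ ^ (p - 2) * ⟪y - xk, xb - y⟫ := by
    have h7 := mul_le_mul_of_nonneg_left hFle hγpos.le
    rw [hcp] at h7
    have hne : xk - y = -(y - xk) := by abel
    rw [hne, norm_neg, inner_neg_left] at h7
    have heq : γ k * (-(1 / γ k) * (‖y - xk‖ ^ (p - 2) * -⟪y - xk, xb - y⟫))
        = ‖y - xk‖ ^ (p - 2) * ⟪y - xk, xb - y⟫ := by
      field_simp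
    rw [heq] at h7
    exact h7
  -- key monotonicity estimate
  have hkm := key_mono hp (xb - xk) (y - xk)
  have huv : (xb - xk) - (y - xk) = xb - y := by abel
  rw [huv] at hkm
  have hchain : γ k * F ≤ ‖xb - xk‖ ^ (p - 1) * ‖xb - y‖
      - (1/2 : ℝ) ^ (p - 1) * ‖xb - y‖ ^ p := le_trans hγF hkm
  -- compare the constants
  have hσ : ((1:ℝ)/2) ^ ((3 * p - 2) / 2) / p ≤ ((1:ℝ)/2) ^ (p - 1) := by
    rw [show (3 * p - 2) / 2 = (p - 1) + p / 2 by ring,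
      Real.rpow_add (by norm_num : (0:ℝ) < 1/2)]
    have h2 : ((1:ℝ)/2) ^ (p / 2) ≤ 1 :=
      Real.rpow_le_one (by norm_num) (by norm_num) (by linarith)
    have h3 : (0:ℝ) < ((1:ℝ)/2) ^ (p - 1) := Real.rpow_pos_of_pos (by norm_num) _
    rw [div_le_iff₀ hppos]
    nlinarith
  have hWp : (0:ℝ) ≤ ‖xb - y‖ ^ p := Real.rpow_nonneg (norm_nonneg _) _
  have hfinal : γ k * F + ((1:ℝ)/2) ^ ((3 * p - 2) / 2) / p * ‖xb - y‖ ^ p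
      ≤ ‖xb - xk‖ ^ (p - 1) * ‖xb - y‖ := by
    linarith [hchain, mul_le_mul_of_nonneg_right hσ hWp]
  rw [hFeq, ← EReal.coe_mul, ← EReal.coe_add]
  exact_mod_cast hfinal
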